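/- Any group acting semiregularly on a set is meet-coherent: for semiregular G ≤ Sym(Ω) and x, y ∈ G, if z generates ⟨x⟩ ∩ ⟨y⟩ then π(z) = π(x) ∧ π(y). -/

import Mathlib

/-- The orbit partition of a permutation `g`, as a setoid on `Ω`. -/
def piPart {Ω : Type*} (g : Equiv.Perm Ω) : Setoid Ω :=
  MulAction.orbitRel (Subgroup.zpowers g) Ω

/-- The set of orbit partitions of elements of a permutation group `G`. -/
def piSet {Ω : Type*} (G : Subgroup (Equiv.Perm Ω)) : Set (Setoid Ω) :=
  {P | ∃ g ∈ G, piPart g = P}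

/-- `G` is join-coherent if its set of orbit partitions is closed under joins. -/
def JoinCoherent {Ω : Type*} (G : Subgroup (Equiv.Perm Ω)) : Prop :=
  ∀ P ∈ piSet G, ∀ Q ∈ piSet G, P ⊔ Q ∈ piSet G

/-- `G` is meet-coherent if its set of orbit partitions is closed under meets. -/
def MeetCoherent {Ω : Type*} (G : Subgroup (Equiv.Perm Ω)) : Prop :=
  ∀ P ∈ piSet G, ∀ Q ∈ piSet G, P ⊓ Q ∈ piSet G

lemma piPart_rel_iff {Ω : Type*} (g : Equiv.Perm Ω) (a b : Ω) :
    piPart g a b ↔ ∃ n : ℤ, (g ^ n) b = a := by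
  show (MulAction.orbitRel (Subgroup.zpowers g) Ω) a b ↔ _
  rw [MulAction.orbitRel_apply, MulAction.mem_orbit_iff]
  constructor
  · rintro ⟨⟨u, n, rfl⟩, h⟩; exact ⟨n, h⟩
  · rintro ⟨n, h⟩; exact ⟨⟨g ^ n, n, rfl⟩, h⟩

/-- subgroups of cyclic subgroups are generated by a single element -/
lemma exists_zpowers_eq {G : Type*} [Group G] (x : G) (H : Subgroup G)
    (hle : H ≤ Subgroup.zpowers x) : ∃ z, Subgroup.zpowers z = H := by
  let S : AddSubgroup ℤ :=
    { carrier := {n : ℤ | x ^ n ∈ H}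
      zero_mem' := by simp [H.one_mem]
      add_mem' := by intro a b ha hb; simpa [zpow_add] using H.mul_mem ha hb
      neg_mem' := by intro a ha; simpa using H.inv_mem ha }
  obtain ⟨a, ha⟩ := Int.subgroup_cyclic S
  refine ⟨x ^ a, le_antisymm ?_ ?_⟩
  · rw [Subgroup.zpowers_le]
    have : a ∈ S := ha ▸ AddSubgroup.mem_closure_singleton.2 ⟨1, one_zsmul a⟩
    exact this
  · intro h hh
    obtain ⟨n, rfl⟩ := hle hh
    have hn : n ∈ S := hh
    rw [ha, AddSubgroup.mem_closure_singleton] at hn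
    obtain ⟨m, hm⟩ := hn
    refine ⟨m, ?_⟩
    dsimp only
    rw [← zpow_mul]
    congr 1
    rw [mul_comm]
    simpa using hm

lemma piPart_eq_inf {Ω : Type*} (G : Subgroup (Equiv.Perm Ω))
    (hsemi : ∀ g ∈ G, ∀ ω : Ω, g ω = ω → g = 1)
    (x y z : Equiv.Perm Ω) (hx : x ∈ G) (hy : y ∈ G)
    (hgen : Subgroup.zpowers x ⊓ Subgroup.zpowers y = Subgroup.zpowers z) :
    piPart z = piPart x ⊓ piPart y := by
  have hz : z ∈ Subgroup.zpowers x ⊓ Subgroup.zpowers y := by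
    rw [hgen]; exact Subgroup.mem_zpowers z
  obtain ⟨⟨p, hp⟩, ⟨q, hq⟩⟩ := hz
  dsimp only at hp hq
  ext a b
  show piPart z a b ↔ piPart x a b ∧ piPart y a b
  rw [piPart_rel_iff, piPart_rel_iff, piPart_rel_iff]
  constructor
  · rintro ⟨n, rfl⟩
    refine ⟨⟨p * n, ?_⟩, ⟨q * n, ?_⟩⟩
    · rw [zpow_mul, hp]
    · rw [zpow_mul, hq]
  · rintro ⟨⟨m, rfl⟩, ⟨k, hk⟩⟩
    have hfix : ((y ^ k)⁻¹ * x ^ m) b = b := by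
      show (y ^ k)⁻¹ ((x ^ m) b) = b
      rw [← hk]
      simp
    have h1 : (y ^ k)⁻¹ * x ^ m ∈ G :=
      G.mul_mem (G.inv_mem (G.zpow_mem hy k)) (G.zpow_mem hx m)
    have h2 : (y ^ k)⁻¹ * x ^ m = 1 := hsemi _ h1 b hfix
    have h3 : x ^ m = y ^ k := by
      rw [eq_comm, ← inv_mul_eq_one]; exact h2
    have hmem : x ^ m ∈ Subgroup.zpowers z := by
      rw [← hgen, Subgroup.mem_inf]
      exact ⟨⟨m, rfl⟩, h3 ▸ ⟨k, rfl⟩⟩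
    obtain ⟨n, hn⟩ := hmem
    dsimp only at hn
    exact ⟨n, by rw [hn]⟩

theorem semiregular_meetCoherent {Ω : Type*} (G : Subgroup (Equiv.Perm Ω))
    (hsemi : ∀ g ∈ G, ∀ ω : Ω, g ω = ω → g = 1)
    (x y z : Equiv.Perm Ω) (hx : x ∈ G) (hy : y ∈ G)
    (hgen : Subgroup.zpowers x ⊓ Subgroup.zpowers y = Subgroup.zpowers z) :
    piPart z = piPart x ⊓ piPart y ∧ MeetCoherent G := by
  refine ⟨piPart_eq_inf G hsemi x y z hx hy hgen, ?_⟩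
  rintro P ⟨u, hu, rfl⟩ Q ⟨v, hv, rfl⟩
  obtain ⟨w, hw⟩ := exists_zpowers_eq u (Subgroup.zpowers u ⊓ Subgroup.zpowers v) inf_le_left
  exact ⟨w, by
    have hwG : w ∈ G := by
      have : w ∈ Subgroup.zpowers u ⊓ Subgroup.zpowers v := hw ▸ Subgroup.mem_zpowers w
      exact Subgroup.zpowers_le.2 hu this.1
    exact ⟨hwG, piPart_eq_inf G hsemi u v w hu hv hw.symm⟩⟩
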